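/- Let G = (V,E) be a hypergraph, let w ∈ V, let f be a nonempty set of nodes disjoint from V, and let G' be the hypergraph obtained from G by expanding w to f. If CER(G) is an extension of MP(G), then CER(G') is an extension of MP(G'). -/

import Mathlib

open Finset

namespace BPO

variable {N : Type*} [DecidableEq N]

/-- Coordinate index set of `ℝ^{V ∪ E}`: one coordinate for each edge, and one
coordinate (labelled by the corresponding singleton) for each node. -/
def coords (V : Finset N) (E : Finset (Finset N)) : Finset (Finset N) :=
  E ∪ V.image fun v => {v}

/-- A point of `ℝ^{V ∪ E}`. -/
abbrev Pt (V : Finset N) (E : Finset (Finset N)) : Type _ :=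
  {p : Finset N // p ∈ coords V E} → ℝ

/-- Evaluate a coordinate of a point, with the convention `z_∅ = 1`.
For a node `v`, the coordinate `z_v` is `ev z {v}`. -/
noncomputable def ev {V : Finset N} {E : Finset (Finset N)} (z : Pt V E)
    (p : Finset N) : ℝ :=
  if h : p ∈ coords V E then z ⟨p, h⟩ else if p = ∅ then 1 else 0

/-- The multilinear set `S(G)`: binary points with `z_e = ∏_{v ∈ e} z_v`. -/
def mlSet (V : Finset N) (E : Finset (Finset N)) : Set (Pt V E) :=
  { z | (∀ p, z p = 0 ∨ z p = 1) ∧ ∀ e ∈ E, ev z e = ∏ v ∈ e, ev z {v} }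

/-- The multilinear polytope `MP(G)`. -/
noncomputable def MP (V : Finset N) (E : Finset (Finset N)) : Set (Pt V E) :=
  convexHull ℝ (mlSet V E)

/-- The completion `cl(E) = { f ⊆ e : |f| ≥ 2, e ∈ E }`. -/
def clE (E : Finset (Finset N)) : Finset (Finset N) :=
  (E.biUnion Finset.powerset).filter fun g => 2 ≤ g.card

/-- The set of maximal edges of `E`. -/
def maxEdges (E : Finset (Finset N)) : Finset (Finset N) :=
  E.filter fun e => ∀ e' ∈ E, e ⊆ e' → e = e'

/-- The linear function `ψ(U, e)`. -/
noncomputable def psi {V : Finset N} {E : Finset (Finset N)} (z : Pt V E)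
    (U e : Finset N) : ℝ :=
  ∑ W ∈ U.powerset, (if Even W.card then (1 : ℝ) else -1) * ev z ((e \ U) ∪ W)

/-- The complete edge relaxation constraints (`ψ(U,e) ≥ 0` for `U ⊆ e`, `e` a
maximal edge of `E`), imposed on the coordinate space `ℝ^{V ∪ F}`. -/
noncomputable def cerSet (V : Finset N) (E F : Finset (Finset N)) : Set (Pt V F) :=
  { z | ∀ e ∈ maxEdges E, ∀ U ⊆ e, 0 ≤ psi z U e }

/-- The complete edge relaxation `CER(G) ⊆ ℝ^{V ∪ cl(E)}`. -/
noncomputable def CER (V : Finset N) (E : Finset (Finset N)) : Set (Pt V (clE E)) :=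
  cerSet V E (clE E)

/-- Projection onto the coordinates of `ℝ^{V₂ ∪ E₂}`. -/
noncomputable def res (V₂ : Finset N) (E₂ : Finset (Finset N)) {V₁ : Finset N}
    {E₁ : Finset (Finset N)} (z : Pt V₁ E₁) : Pt V₂ E₂ :=
  fun p => ev z p.1

/-- `CER(G)` is an extension of `MP(G)`: `MP(G)` is the image of `CER(G)` under
the projection of `ℝ^{V ∪ cl(E)}` onto `ℝ^{V ∪ E}`. -/
def IsExtension (V : Finset N) (E : Finset (Finset N)) : Prop :=
  MP V E = (fun z : Pt V (clE E) => res V E z) '' CER V E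

/-- The running intersection property for the family `E`. -/
def RunningIntersection (E : Finset (Finset N)) : Prop :=
  ∃ L : List (Finset N), L.Nodup ∧ L.toFinset = E ∧
    ∀ k, 0 < k → k < L.length →
      ∃ j < k, L.getD k ∅ ∩ (L.take k).foldr (· ∪ ·) ∅ ⊆ L.getD j ∅

/-- A hypergraph is α-acyclic if its edge set has the running intersection property. -/
def AlphaAcyclic (E : Finset (Finset N)) : Prop := RunningIntersection E

/-- `s_i = e_i ∩ e_{i+1}` for a cyclic sequence `e_1, …, e_ℓ, e_{ℓ+1} = e_1`. -/
def cycS (c : ℕ → Finset N) (ℓ i : ℕ) : Finset N :=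
  c i ∩ c (if i = ℓ then 1 else i + 1)

/-- A simple cycle `e_1, …, e_ℓ, e_{ℓ+1} = e_1` of length `ℓ`. -/
def IsSimpleCycle (E : Finset (Finset N)) (ℓ : ℕ) (c : ℕ → Finset N) : Prop :=
  3 ≤ ℓ ∧ (∀ i, 1 ≤ i → i ≤ ℓ → c i ∈ E) ∧
    ∀ i j k, 1 ≤ i → i < j → j < k → k ≤ ℓ → ∀ e ∈ E,
      ((cycS c ℓ i ∪ cycS c ℓ j ∪ cycS c ℓ k) \ e).Nonempty

/-- An α-cycle `e_1, …, e_ℓ, e_{ℓ+1} = e_1` of length `ℓ`. -/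
def IsAlphaCycle (E : Finset (Finset N)) (ℓ : ℕ) (c : ℕ → Finset N) : Prop :=
  3 ≤ ℓ ∧ (∀ i, 1 ≤ i → i ≤ ℓ → c i ∈ E) ∧
    (∀ i j, 1 ≤ i → i ≤ ℓ → 1 ≤ j → j ≤ ℓ → i ≠ j → (c i \ c j).Nonempty) ∧
    ∀ i, 1 ≤ i → i ≤ ℓ → ∀ e ∈ E,
      ((cycS c ℓ (if i = 1 then ℓ else i - 1) ∪ cycS c ℓ i ∪
        cycS c ℓ (if i = ℓ then 1 else i + 1)) \ e).Nonempty

/-- A chordless α-cycle: no subsequence `e_i, …, e_j, ẽ, e_i` is an α-cycle. -/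
def Chordless (E : Finset (Finset N)) (ℓ : ℕ) (c : ℕ → Finset N) : Prop :=
  ∀ i j, 1 ≤ i → i < j → j ≤ ℓ → j - i ≤ ℓ - 3 →
    ∀ g ∈ E, (∀ k, i ≤ k → k ≤ j → g ≠ c k) →
      ¬ IsAlphaCycle E (j - i + 2) fun k => if k ≤ j - i + 1 then c (i + k - 1) else g

/-- The edge set `E_{V'}` of the subhypergraph induced by `W`. -/
def indE (E : Finset (Finset N)) (W : Finset N) : Finset (Finset N) :=
  (E.image fun e => e ∩ W).filter fun g => 2 ≤ g.card

/-- The edge set `E_{w→u}` obtained by contracting `w` to `u`. -/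
def contrE (E : Finset (Finset N)) (u w : N) : Finset (Finset N) :=
  E.filter (fun e => w ∉ e) ∪
    (E.filter fun e => w ∈ e ∧ e ≠ {u, w}).image fun e => e.erase w ∪ {u}

/-- The edge set `E'` obtained by expanding `w` to `f`. -/
def expE (E : Finset (Finset N)) (w : N) (f : Finset N) : Finset (Finset N) :=
  insert f
    (E.filter (fun e => w ∉ e) ∪ (E.filter fun e => w ∈ e).image fun e => e.erase w ∪ f)

/-- The coordinate renaming `x_w → z_f`, `x_v → z_v`, `x_e → z_e` (`w ∉ e`),
`x_e → z_{(e∖{w}) ⊎ f}` (`w ∈ e`) used in the expansion operation. -/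
def expRen (w : N) (f : Finset N) (p : Finset N) : Finset N :=
  if p = {w} then f else if w ∈ p then p.erase w ∪ f else p

section Helpers

variable {N : Type*} [DecidableEq N]

lemma mem_coords_singleton {V : Finset N} {E : Finset (Finset N)} {v : N} (h : v ∈ V) :
    ({v} : Finset N) ∈ coords V E := by
  apply Finset.mem_union_right
  exact Finset.mem_image.2 ⟨v, h, rfl⟩

lemma mem_coords_edge {V : Finset N} {E : Finset (Finset N)} {e : Finset N} (h : e ∈ E) :
    e ∈ coords V E := Finset.mem_union_left _ h

lemma ev_coord {V : Finset N} {E : Finset (Finset N)} (z : Pt V E) {p : Finset N}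
    (h : p ∈ coords V E) : ev z p = z ⟨p, h⟩ := dif_pos h

lemma not_mem_coords_empty {V : Finset N} {E : Finset (Finset N)}
    (hE : ∀ g ∈ E, g.Nonempty) : (∅ : Finset N) ∉ coords V E := by
  intro h
  rcases Finset.mem_union.1 h with h | h
  · exact (hE _ h).ne_empty rfl
  · rcases Finset.mem_image.1 h with ⟨v, _, hv⟩
    exact Finset.singleton_ne_empty v hv

lemma ev_empty {V : Finset N} {E : Finset (Finset N)} (z : Pt V E)
    (hE : ∀ g ∈ E, g.Nonempty) : ev z ∅ = 1 := by
  rw [ev, dif_neg (not_mem_coords_empty hE), if_pos rfl]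

lemma mem_clE {E : Finset (Finset N)} {g : Finset N} :
    g ∈ clE E ↔ 2 ≤ g.card ∧ ∃ e ∈ E, g ⊆ e := by
  simp [clE, and_comm]

lemma clE_nonempty {E : Finset (Finset N)} : ∀ g ∈ clE E, g.Nonempty := by
  intro g hg
  rw [← Finset.card_pos]
  exact le_trans (by norm_num) (mem_clE.1 hg).1

lemma ev_smul_add {V : Finset N} {E : Finset (Finset N)} (z₁ z₂ : Pt V E) (a b : ℝ)
    (hab : a + b = 1) (p : Finset N) :
    ev (a • z₁ + b • z₂) p = a * ev z₁ p + b * ev z₂ p := by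
  unfold ev
  split_ifs with h h2
  · simp [Pi.add_apply, Pi.smul_apply, smul_eq_mul]
  · simpa using hab.symm
  · ring

lemma psi_smul_add {V : Finset N} {E : Finset (Finset N)} (z₁ z₂ : Pt V E) (a b : ℝ)
    (hab : a + b = 1) (U e : Finset N) :
    psi (a • z₁ + b • z₂) U e = a * psi z₁ U e + b * psi z₂ U e := by
  unfold psi
  rw [Finset.mul_sum, Finset.mul_sum, ← Finset.sum_add_distrib]
  refine Finset.sum_congr rfl fun W _ => ?_
  rw [ev_smul_add _ _ _ _ hab]
  ring

lemma ev_res {V₂ : Finset N} {E₂ : Finset (Finset N)} {V₁ : Finset N} {E₁ : Finset (Finset N)}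
    (z : Pt V₁ E₁) {p : Finset N} (h : p ∈ coords V₂ E₂) :
    ev (res V₂ E₂ z) p = ev z p := by
  rw [ev_coord _ h]; rfl

lemma sign_eq (n : ℕ) : (if Even n then (1:ℝ) else -1) = (-1 : ℝ)^n := by
  rcases Nat.even_or_odd n with h | h
  · rw [if_pos h, h.neg_one_pow]
  · rw [if_neg (Nat.not_even_iff_odd.2 h), h.neg_one_pow]

lemma sum_pow_card (s : Finset N) :
    (∑ m ∈ s.powerset, (-1 : ℝ) ^ m.card) = if s = ∅ then 1 else 0 := by
  have := Finset.sum_powerset_neg_one_pow_card (x := s)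
  exact_mod_cast congrArg (Int.cast : ℤ → ℝ) this

/-- Möbius-type inversion: the simplex decomposition identity. -/
lemma mobius (g : Finset N → ℝ) {A e : Finset N} (hA : A ⊆ e) :
    ∑ S ∈ e.powerset,
      (if A ⊆ S then ∑ W ∈ (e \ S).powerset, (-1:ℝ)^W.card * g (S ∪ W) else 0) = g A := by
  rw [Finset.sum_ite, Finset.sum_const_zero, add_zero]
  have key : ∑ S ∈ e.powerset.filter (A ⊆ ·), ∑ W ∈ (e \ S).powerset,
        (-1:ℝ)^W.card * g (S ∪ W)
      = ∑ B ∈ e.powerset.filter (A ⊆ ·), ∑ C ∈ (B \ A).powerset,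
        (-1:ℝ)^C.card * g B := by
    rw [Finset.sum_sigma', Finset.sum_sigma']
    refine Finset.sum_nbij' (fun x => ⟨x.1 ∪ x.2, x.2⟩) (fun y => ⟨y.1 \ y.2, y.2⟩) ?_ ?_ ?_ ?_ ?_
    · rintro ⟨S, W⟩ hx
      simp only [Finset.mem_sigma, Finset.mem_filter, Finset.mem_powerset] at hx ⊢
      obtain ⟨⟨hSe, hAS⟩, hW⟩ := hx
      have hWe : W ⊆ e \ S := hW
      refine ⟨⟨Finset.union_subset hSe ((hWe.trans (Finset.sdiff_subset)) ), hAS.trans Finset.subset_union_left⟩, ?_⟩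
      intro x hx
      rw [Finset.mem_sdiff]
      exact ⟨Finset.mem_union_right _ hx, fun hxA => (Finset.mem_sdiff.1 (hWe hx)).2 (hAS hxA)⟩
    · rintro ⟨B, C⟩ hy
      simp only [Finset.mem_sigma, Finset.mem_filter, Finset.mem_powerset] at hy ⊢
      obtain ⟨⟨hBe, hAB⟩, hC⟩ := hy
      have hCBA : C ⊆ B \ A := hC
      refine ⟨⟨(Finset.sdiff_subset).trans hBe, ?_⟩, ?_⟩
      · intro x hx
        rw [Finset.mem_sdiff]
        exact ⟨hAB hx, fun hxC => (Finset.mem_sdiff.1 (hCBA hxC)).2 hx⟩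
      · intro x hx
        rw [Finset.mem_sdiff]
        have hxB := (Finset.mem_sdiff.1 (hCBA hx)).1
        exact ⟨hBe hxB, by simp [Finset.mem_sdiff, hx]⟩
    · rintro ⟨S, W⟩ hx
      simp only [Finset.mem_sigma, Finset.mem_filter, Finset.mem_powerset] at hx
      obtain ⟨⟨hSe, hAS⟩, hW⟩ := hx
      have hdisj : Disjoint S W := by
        rw [Finset.disjoint_right]
        intro a ha
        exact (Finset.mem_sdiff.1 (hW ha)).2
      simp only [Sigma.mk.inj_iff, heq_eq_eq, and_true]
      exact Finset.union_sdiff_cancel_right hdisj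
    · rintro ⟨B, C⟩ hy
      simp only [Finset.mem_sigma, Finset.mem_filter, Finset.mem_powerset] at hy
      obtain ⟨⟨hBe, hAB⟩, hC⟩ := hy
      have hCB : C ⊆ B := (hC.trans Finset.sdiff_subset)
      simp only [Sigma.mk.inj_iff, heq_eq_eq, and_true]
      exact Finset.sdiff_union_of_subset hCB
    · rintro ⟨S, W⟩ _; rfl
  rw [key]
  rw [Finset.sum_congr rfl (fun B _ => by rw [← Finset.sum_mul, sum_pow_card])]
  rw [Finset.sum_eq_single_of_mem A (by simp [Finset.mem_filter, Finset.mem_powerset, hA])]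
  · simp
  · intro B hB hBA
    rw [Finset.mem_filter, Finset.mem_powerset] at hB
    rw [if_neg, zero_mul]
    intro h
    exact hBA (Finset.Subset.antisymm (Finset.sdiff_eq_empty_iff_subset.1 h) hB.2)

end Helpers
section Helpers2

variable {N : Type*} [DecidableEq N]

lemma psi_eq_sum {V : Finset N} {F : Finset (Finset N)} (z : Pt V F) {S e : Finset N}
    (hS : S ⊆ e) :
    psi z (e \ S) e = ∑ W ∈ (e \ S).powerset, (-1:ℝ)^W.card * ev z (S ∪ W) := by
  unfold psi
  rw [Finset.sdiff_sdiff_eq_self hS]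
  exact Finset.sum_congr rfl fun W _ => by rw [sign_eq]

/-- Simplex decomposition of a point satisfying the CER inequalities for a single edge. -/
lemma decomp_eq {V : Finset N} {F : Finset (Finset N)} (z : Pt V F) {e A : Finset N}
    (hA : A ⊆ e) :
    ∑ S ∈ e.powerset, (if A ⊆ S then psi z (e \ S) e else 0) = ev z A := by
  rw [Finset.sum_congr rfl (fun S hS => ?_), mobius (ev z) hA]
  rw [Finset.mem_powerset] at hS
  by_cases h : A ⊆ S
  · rw [if_pos h, if_pos h, psi_eq_sum z hS]
  · rw [if_neg h, if_neg h]

lemma sum_prod_sign (t : N → ℝ) {e U : Finset N} (hU : U ⊆ e) :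
    ∑ W ∈ U.powerset, (-1:ℝ)^W.card * ∏ v ∈ (e \ U) ∪ W, t v
      = (∏ v ∈ e \ U, t v) * ∏ v ∈ U, (1 - t v) := by
  have h1 : ∀ W ∈ U.powerset, (-1:ℝ)^W.card * ∏ v ∈ (e \ U) ∪ W, t v
      = (∏ v ∈ e \ U, t v) * ((∏ v ∈ W, (-t v)) * ∏ v ∈ U \ W, (1:ℝ)) := by
    intro W hW
    rw [Finset.mem_powerset] at hW
    have hdisj : Disjoint (e \ U) W := by
      rw [Finset.disjoint_right]
      exact fun a ha => fun h => (Finset.mem_sdiff.1 h).2 (hW ha)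
    rw [Finset.prod_union hdisj]
    have : ∏ v ∈ W, (-t v) = (-1:ℝ)^W.card * ∏ v ∈ W, t v := by
      rw [Finset.prod_congr rfl (fun v _ => (neg_one_mul (t v)).symm), Finset.prod_mul_distrib,
        Finset.prod_const]
    rw [this, Finset.prod_const_one]
    ring
  rw [Finset.sum_congr rfl h1, ← Finset.mul_sum, ← Finset.prod_add]
  congr 1
  exact Finset.prod_congr rfl (fun v _ => by ring)

lemma expRen_def (w : N) (f : Finset N) (p : Finset N) :
    expRen w f p = if w ∈ p then p.erase w ∪ f else p := by
  unfold expRen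
  by_cases h : p = {w}
  · subst h
    simp
  · rw [if_neg h]

lemma expRen_empty (w : N) (f : Finset N) : expRen w f ∅ = ∅ := by
  rw [expRen_def, if_neg (Finset.notMem_empty w)]

lemma expRen_singleton (w : N) (f : Finset N) (v : N) :
    expRen w f {v} = if v = w then f else {v} := by
  rw [expRen_def]
  by_cases h : v = w
  · subst h; simp
  · simp [h, Ne.symm h]

lemma expRen_mono (w : N) (f : Finset N) {A B : Finset N} (h : A ⊆ B) :
    expRen w f A ⊆ expRen w f B := by
  rw [expRen_def, expRen_def]
  by_cases hA : w ∈ A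
  · rw [if_pos hA, if_pos (h hA)]
    exact Finset.union_subset_union (Finset.erase_subset_erase _ h) (le_refl f)
  · rw [if_neg hA]
    by_cases hB : w ∈ B
    · rw [if_pos hB]
      intro a ha
      exact Finset.mem_union_left _ (Finset.mem_erase.2 ⟨fun he => hA (he ▸ ha), h ha⟩)
    · rw [if_neg hB]; exact h

lemma expRen_subset_iff (w : N) (f : Finset N) (A S : Finset N) :
    expRen w f A ⊆ S ↔ ∀ v ∈ A, expRen w f {v} ⊆ S := by
  rw [expRen_def]
  constructor
  · intro h v hv
    rw [expRen_singleton]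
    by_cases hvw : v = w
    · rw [if_pos hvw]
      rw [if_pos (hvw ▸ hv)] at h
      exact (Finset.union_subset_iff.1 h).2
    · rw [if_neg hvw, Finset.singleton_subset_iff]
      by_cases hwA : w ∈ A
      · rw [if_pos hwA] at h
        exact h (Finset.mem_union_left _ (Finset.mem_erase.2 ⟨hvw, hv⟩))
      · rw [if_neg hwA] at h
        exact h hv
  · intro h
    by_cases hwA : w ∈ A
    · rw [if_pos hwA]
      apply Finset.union_subset
      · intro a ha
        rw [Finset.mem_erase] at ha
        have := h a ha.2
        rwa [expRen_singleton, if_neg ha.1, Finset.singleton_subset_iff] at this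
      · have := h w hwA
        rwa [expRen_singleton, if_pos rfl] at this
    · rw [if_neg hwA]
      intro a ha
      have := h a ha
      rw [expRen_singleton, if_neg (fun hv => hwA (by rwa [hv] at ha)), Finset.singleton_subset_iff] at this
      exact this

lemma mem_expE {E : Finset (Finset N)} {w : N} {f : Finset N} {g : Finset N} :
    g ∈ expE E w f ↔ g = f ∨ (g ∈ E ∧ w ∉ g) ∨ ∃ e ∈ E, w ∈ e ∧ g = e.erase w ∪ f := by
  simp only [expE, Finset.mem_insert, Finset.mem_union, Finset.mem_filter, Finset.mem_image]
  constructor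
  · rintro (h | ⟨h1, h2⟩ | ⟨e, ⟨he, hwe⟩, rfl⟩)
    · exact Or.inl h
    · exact Or.inr (Or.inl ⟨h1, h2⟩)
    · exact Or.inr (Or.inr ⟨e, he, hwe, rfl⟩)
  · rintro (h | ⟨h1, h2⟩ | ⟨e, he, hwe, rfl⟩)
    · exact Or.inl h
    · exact Or.inr (Or.inl ⟨h1, h2⟩)
    · exact Or.inr (Or.inr ⟨e, ⟨he, hwe⟩, rfl⟩)

lemma mem_maxEdges {E : Finset (Finset N)} {e : Finset N} :
    e ∈ maxEdges E ↔ e ∈ E ∧ ∀ e' ∈ E, e ⊆ e' → e = e' := by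
  simp [maxEdges]

lemma exists_maxEdge {E : Finset (Finset N)} {e : Finset N} (he : e ∈ E) :
    ∃ m ∈ maxEdges E, e ⊆ m := by
  have hfin : (↑(E.filter (e ⊆ ·)) : Set (Finset N)).Finite := (E.filter (e ⊆ ·)).finite_toSet
  have hne : (↑(E.filter (e ⊆ ·)) : Set (Finset N)).Nonempty :=
    ⟨e, by simp [Finset.mem_filter, he]⟩
  obtain ⟨m, hm, hmax⟩ := hfin.exists_maximalFor id _ hne
  simp only [Finset.coe_filter, Set.mem_setOf_eq] at hm
  refine ⟨m, mem_maxEdges.2 ⟨hm.1, fun e' he' hme' => ?_⟩, hm.2⟩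
  exact Finset.Subset.antisymm hme' (hmax (by simp [Finset.mem_filter, he', hm.2.trans hme']) hme')

end Helpers2
section Helpers3

variable {N : Type*} [DecidableEq N]

lemma ev_prodpt {V : Finset N} {E : Finset (Finset N)} (s : N → ℝ) {A e : Finset N}
    (hVsub : ∀ e ∈ E, e ⊆ V) (he : e ∈ E) (hA : A ⊆ e) :
    ev (fun p : {p : Finset N // p ∈ coords V (clE E)} => ∏ v ∈ p.1, s v) A
      = ∏ v ∈ A, s v := by
  by_cases h : A ∈ coords V (clE E)
  · rw [ev_coord _ h]
  · have hAe : A = ∅ := by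
      by_contra hne
      rcases Nat.lt_or_ge A.card 2 with hlt | hge
      · have h1 : A.card = 1 := by
          have := Finset.card_pos.2 (Finset.nonempty_of_ne_empty hne)
          omega
        obtain ⟨v, rfl⟩ := Finset.card_eq_one.1 h1
        exact h (mem_coords_singleton (hVsub e he (hA (Finset.mem_singleton_self v))))
      · exact h (mem_coords_edge (mem_clE.2 ⟨hge, e, he, hA⟩))
    subst hAe
    rw [ev, dif_neg h, if_pos rfl, Finset.prod_empty]

/-- psi of a product point over an edge equals a product formula. -/
lemma psi_prodpt {V : Finset N} {E : Finset (Finset N)} (s : N → ℝ) {U e : Finset N}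
    (hVsub : ∀ e ∈ E, e ⊆ V) (he : e ∈ E) (hU : U ⊆ e) :
    psi (fun p : {p : Finset N // p ∈ coords V (clE E)} => ∏ v ∈ p.1, s v) U e
      = (∏ v ∈ e \ U, s v) * ∏ v ∈ U, (1 - s v) := by
  unfold psi
  rw [← sum_prod_sign s hU]
  refine Finset.sum_congr rfl fun W hW => ?_
  rw [Finset.mem_powerset] at hW
  rw [sign_eq, ev_prodpt s hVsub he
    (Finset.union_subset Finset.sdiff_subset (hW.trans hU))]

/-- Every multilinear point lifts to the complete edge relaxation. -/
lemma mlSet_sub_res (V : Finset N) (E : Finset (Finset N)) (hVsub : ∀ e ∈ E, e ⊆ V)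
    (hcover : ∀ v ∈ V, ∃ e ∈ E, v ∈ e) :
    mlSet V E ⊆ (fun z : Pt V (clE E) => res V E z) '' CER V E := by
  intro y hy
  obtain ⟨hybin, hyprod⟩ := hy
  set s : N → ℝ := fun v => ev y {v} with hs
  set zhat : Pt V (clE E) := fun p => ∏ v ∈ p.1, s v with hzhat
  have hsbin : ∀ v ∈ V, s v = 0 ∨ s v = 1 := by
    intro v hv
    show ev y {v} = 0 ∨ ev y {v} = 1
    rw [ev_coord _ (mem_coords_singleton hv)]
    exact hybin _
  refine ⟨zhat, ?_, ?_⟩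
  · intro e he U hU
    have heE : e ∈ E := (mem_maxEdges.1 he).1
    rw [hzhat, psi_prodpt s hVsub heE hU]
    apply mul_nonneg
    · apply Finset.prod_nonneg
      intro v hv
      rcases hsbin v (hVsub e heE (Finset.sdiff_subset hv)) with h | h <;> rw [h] <;> norm_num
    · apply Finset.prod_nonneg
      intro v hv
      rcases hsbin v (hVsub e heE (hU hv)) with h | h <;> rw [h] <;> norm_num
  · funext p
    obtain ⟨p, hp⟩ := p
    show ev zhat p = y ⟨p, hp⟩
    rcases Finset.mem_union.1 hp with hpE | hpV
    · rw [hzhat, ev_prodpt s hVsub hpE (Finset.Subset.refl p), ← hyprod p hpE,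
        ev_coord _ hp]
    · obtain ⟨v, hv, rfl⟩ := Finset.mem_image.1 hpV
      obtain ⟨e, he, hve⟩ := hcover v hv
      rw [hzhat, ev_prodpt s hVsub he (Finset.singleton_subset_iff.2 hve),
        Finset.prod_singleton]
      show ev y {v} = y ⟨{v}, hp⟩
      rw [ev_coord _ hp]

/-- The image of the CER under projection is convex. -/
lemma convex_res_CER (V : Finset N) (E F : Finset (Finset N)) :
    Convex ℝ ((fun z : Pt V F => res V E z) '' cerSet V E F) := by
  rintro p₁ ⟨z₁, h₁, rfl⟩ p₂ ⟨z₂, h₂, rfl⟩ a b ha hb hab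
  refine ⟨a • z₁ + b • z₂, ?_, ?_⟩
  · intro e he U hU
    rw [psi_smul_add _ _ _ _ hab]
    exact add_nonneg (mul_nonneg ha (h₁ e he U hU)) (mul_nonneg hb (h₂ e he U hU))
  · funext p
    show ev (a • z₁ + b • z₂) p.1 = a * res V E z₁ p + b * res V E z₂ p
    rw [ev_smul_add _ _ _ _ hab]
    rfl

end Helpers3
section Helpers4

variable {N : Type*} [DecidableEq N]
variable {V : Finset N} {E : Finset (Finset N)} {w : N} {f : Finset N}

lemma expE_subset_V' (hVsub : ∀ e ∈ E, e ⊆ V) :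
    ∀ g ∈ expE E w f, g ⊆ V.erase w ∪ f := by
  intro g hg
  rcases mem_expE.1 hg with rfl | ⟨hE, hwg⟩ | ⟨e, he, hwe, rfl⟩
  · exact Finset.subset_union_right
  · intro a ha
    exact Finset.mem_union_left _
      (Finset.mem_erase.2 ⟨fun h => hwg (h ▸ ha), hVsub g hE ha⟩)
  · apply Finset.union_subset
    · intro a ha
      rw [Finset.mem_erase] at ha
      exact Finset.mem_union_left _ (Finset.mem_erase.2 ⟨ha.1, hVsub e he ha.2⟩)
    · exact Finset.subset_union_right

lemma expE_nonempty (hcard : ∀ e ∈ E, 2 ≤ e.card) (hf : f.Nonempty) :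
    ∀ g ∈ expE E w f, g.Nonempty := by
  intro g hg
  rcases mem_expE.1 hg with rfl | ⟨hE, _⟩ | ⟨e, he, hwe, rfl⟩
  · exact hf
  · rw [← Finset.card_pos]
    have := hcard g hE; omega
  · exact Finset.Nonempty.mono Finset.subset_union_right hf

lemma expRen_mem_expE {e : Finset N} (he : e ∈ E) : expRen w f e ∈ expE E w f := by
  rw [expRen_def]
  by_cases hwe : w ∈ e
  · rw [if_pos hwe]
    exact mem_expE.2 (Or.inr (Or.inr ⟨e, he, hwe, rfl⟩))
  · rw [if_neg hwe]
    exact mem_expE.2 (Or.inr (Or.inl ⟨he, hwe⟩))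

lemma erase_nonempty_of_two_le {e : Finset N} (h : 2 ≤ e.card) : (e.erase w).Nonempty := by
  rw [← Finset.card_pos]
  have := Finset.card_erase_of_mem (a := w) (s := e)
  by_cases hw : w ∈ e
  · rw [Finset.card_erase_of_mem hw]; omega
  · rw [Finset.erase_eq_of_notMem hw]; omega

lemma expRen_maxEdge (hcard : ∀ e ∈ E, 2 ≤ e.card) (hVsub : ∀ e ∈ E, e ⊆ V)
    (hf : f.Nonempty) (hdisj : Disjoint f V) {e : Finset N} (he : e ∈ maxEdges E) :
    expRen w f e ∈ maxEdges (expE E w f) := by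
  obtain ⟨heE, hmax⟩ := mem_maxEdges.1 he
  have heV : e ⊆ V := hVsub e heE
  refine mem_maxEdges.2 ⟨expRen_mem_expE heE, ?_⟩
  intro g hg hsub
  rw [expRen_def] at hsub ⊢
  rcases mem_expE.1 hg with hgf | ⟨hgE, hwg⟩ | ⟨e₂, he₂, hwe₂, rfl⟩
  · -- g = f : impossible
    exfalso
    rw [hgf] at hsub
    by_cases hwe : w ∈ e
    · rw [if_pos hwe] at hsub
      obtain ⟨v, hv⟩ := erase_nonempty_of_two_le (w := w) (hcard e heE)
      have hvf : v ∈ f := hsub (Finset.mem_union_left _ hv)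
      exact Finset.disjoint_left.1 hdisj hvf (heV (Finset.mem_of_mem_erase hv))
    · rw [if_neg hwe] at hsub
      have hene : e.Nonempty := Finset.card_pos.1 (by have := hcard e heE; omega)
      obtain ⟨v, hv⟩ := hene
      exact Finset.disjoint_left.1 hdisj (hsub hv) (heV hv)
  · -- g ∈ E, w ∉ g
    by_cases hwe : w ∈ e
    · exfalso
      rw [if_pos hwe] at hsub
      obtain ⟨v, hv⟩ := hf
      have : v ∈ g := hsub (Finset.mem_union_right _ hv)
      exact Finset.disjoint_left.1 hdisj hv (hVsub g hgE this)
    · rw [if_neg hwe] at hsub ⊢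
      exact hmax g hgE hsub
  · -- g = e₂.erase w ∪ f
    by_cases hwe : w ∈ e
    · rw [if_pos hwe] at hsub ⊢
      have hee₂ : e ⊆ e₂ := by
        intro a ha
        by_cases haw : a = w
        · exact haw ▸ hwe₂
        · have ha' : a ∈ e₂.erase w ∪ f :=
            hsub (Finset.mem_union_left _ (Finset.mem_erase.2 ⟨haw, ha⟩))
          rcases Finset.mem_union.1 ha' with h | h
          · exact Finset.mem_of_mem_erase h
          · exact absurd (heV ha) (Finset.disjoint_left.1 hdisj h)
      rw [hmax e₂ he₂ hee₂]
    · exfalso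
      rw [if_neg hwe] at hsub
      have hee₂ : e ⊆ e₂ := by
        intro a ha
        rcases Finset.mem_union.1 (hsub ha) with h | h
        · exact Finset.mem_of_mem_erase h
        · exact absurd (heV ha) (Finset.disjoint_left.1 hdisj h)
      exact hwe ((hmax e₂ he₂ hee₂) ▸ hwe₂)

end Helpers4
section Helpers5

variable {N : Type*} [DecidableEq N]

lemma mem_coords_or_empty {V : Finset N} {E : Finset (Finset N)}
    (hVsub : ∀ e ∈ E, e ⊆ V) {A e : Finset N} (he : e ∈ E) (hA : A ⊆ e) :
    A ∈ coords V (clE E) ∨ A = ∅ := by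
  by_cases h : A ∈ coords V (clE E)
  · exact Or.inl h
  · right
    by_contra hne
    rcases Nat.lt_or_ge A.card 2 with hlt | hge
    · have h1 : A.card = 1 := by
        have := Finset.card_pos.2 (Finset.nonempty_of_ne_empty hne)
        omega
      obtain ⟨v, rfl⟩ := Finset.card_eq_one.1 h1
      exact h (mem_coords_singleton (hVsub e he (hA (Finset.mem_singleton_self v))))
    · exact h (mem_coords_edge (mem_clE.2 ⟨hge, e, he, hA⟩))

lemma ev_collapse {V : Finset N} {E : Finset (Finset N)} {w : N} {f : Finset N}
    (hVsub : ∀ e ∈ E, e ⊆ V)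
    (z' : Pt (V.erase w ∪ f) (clE (expE E w f)))
    {A e : Finset N} (he : e ∈ E) (hA : A ⊆ e) :
    ev (fun p : {p : Finset N // p ∈ coords V (clE E)} => ev z' (expRen w f p.1)) A
      = ev z' (expRen w f A) := by
  rcases mem_coords_or_empty hVsub he hA with h | rfl
  · rw [ev_coord _ h]
  · rw [ev_empty _ (fun g hg => clE_nonempty g hg), expRen_empty,
      ev_empty z' (fun g hg => clE_nonempty g hg)]

lemma claimA {V : Finset N} {E : Finset (Finset N)} {w : N} {f : Finset N}
    (hcard : ∀ e ∈ E, 2 ≤ e.card) (hVsub : ∀ e ∈ E, e ⊆ V)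
    (hf : f.Nonempty) (hdisj : Disjoint f V)
    (z' : Pt (V.erase w ∪ f) (clE (expE E w f)))
    (hz' : z' ∈ CER (V.erase w ∪ f) (expE E w f)) :
    (fun p : {p : Finset N // p ∈ coords V (clE E)} => ev z' (expRen w f p.1))
      ∈ CER V E := by
  intro e he U hU
  set x : Pt V (clE E) := fun p => ev z' (expRen w f p.1) with hxdef
  have heE : e ∈ E := (mem_maxEdges.1 he).1
  set e' := expRen w f e with he'def
  have he' : e' ∈ maxEdges (expE E w f) := expRen_maxEdge hcard hVsub hf hdisj he
  have hμ0 : ∀ S ∈ e'.powerset, 0 ≤ psi z' (e' \ S) e' :=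
    fun S _ => hz' e' he' _ Finset.sdiff_subset
  have step1 : psi x U e = ∑ W ∈ U.powerset, (-1:ℝ)^W.card
      * ev z' (expRen w f ((e \ U) ∪ W)) := by
    unfold psi
    refine Finset.sum_congr rfl fun W hW => ?_
    rw [Finset.mem_powerset] at hW
    rw [sign_eq, ev_collapse hVsub z' heE
      (Finset.union_subset Finset.sdiff_subset (hW.trans hU))]
  have step2 : psi x U e = ∑ W ∈ U.powerset, (-1:ℝ)^W.card *
      ∑ S ∈ e'.powerset, (if expRen w f ((e \ U) ∪ W) ⊆ S then psi z' (e' \ S) e' else 0) := by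
    rw [step1]
    refine Finset.sum_congr rfl fun W hW => ?_
    rw [Finset.mem_powerset] at hW
    rw [decomp_eq z' (expRen_mono w f (Finset.union_subset Finset.sdiff_subset (hW.trans hU)))]
  have step3 : psi x U e = ∑ S ∈ e'.powerset, psi z' (e' \ S) e' *
      ((∏ v ∈ e \ U, (if expRen w f {v} ⊆ S then (1:ℝ) else 0))
        * ∏ v ∈ U, (1 - (if expRen w f {v} ⊆ S then (1:ℝ) else 0))) := by
    rw [step2]
    simp only [Finset.mul_sum]
    rw [Finset.sum_comm]
    refine Finset.sum_congr rfl fun S _ => ?_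
    rw [← sum_prod_sign (fun v => if expRen w f {v} ⊆ S then (1:ℝ) else 0) hU,
      Finset.mul_sum]
    refine Finset.sum_congr rfl fun W hW => ?_
    have hind : (if expRen w f ((e \ U) ∪ W) ⊆ S then (1:ℝ) else 0)
        = ∏ v ∈ (e \ U) ∪ W, (if expRen w f {v} ⊆ S then (1:ℝ) else 0) := by
      rw [Finset.prod_boole]
      exact if_congr (expRen_subset_iff w f _ S) rfl rfl
    rw [← hind]
    split_ifs with h
    · ring
    · ring
  rw [step3]
  apply Finset.sum_nonneg
  intro S hS
  apply mul_nonneg (hμ0 S hS)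
  apply mul_nonneg
  · apply Finset.prod_nonneg
    intro v _
    split_ifs <;> norm_num
  · apply Finset.prod_nonneg
    intro v _
    split_ifs <;> norm_num

end Helpers5
section Helpers6

variable {N : Type*} [DecidableEq N]

lemma prod_binary {s : Finset N} {g : N → ℝ} (h : ∀ v ∈ s, g v = 0 ∨ g v = 1) :
    (∏ v ∈ s, g v) = 0 ∨ (∏ v ∈ s, g v) = 1 := by
  classical
  induction s using Finset.induction_on with
  | empty => right; simp
  | @insert a s' hx ih =>
    rw [Finset.prod_insert hx]
    rcases h a (Finset.mem_insert_self a s') with h0 | h1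
    · left; rw [h0, zero_mul]
    · rcases ih (fun v hv => h v (Finset.mem_insert_of_mem hv)) with h0 | h1'
      · left; rw [h0, mul_zero]
      · right; rw [h1, h1', mul_one]

end Helpers6
theorem stmt14 {N : Type*} [DecidableEq N] (V : Finset N) (E : Finset (Finset N))
    (hcard : ∀ e ∈ E, 2 ≤ e.card) (hVsub : ∀ e ∈ E, e ⊆ V)
    (hcover : ∀ v ∈ V, ∃ e ∈ E, v ∈ e)
    (w : N) (hw : w ∈ V) (f : Finset N) (hf : f.Nonempty) (hdisj : Disjoint f V)
    (hext : IsExtension V E) :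
    IsExtension (V.erase w ∪ f) (expE E w f) := by
  classical
  have hV'sub : ∀ g ∈ expE E w f, g ⊆ V.erase w ∪ f := expE_subset_V' hVsub
  have hwnotf : w ∉ f := fun h => Finset.disjoint_left.1 hdisj h hw
  have hcover' : ∀ v ∈ V.erase w ∪ f, ∃ g ∈ expE E w f, v ∈ g := by
    intro v hv
    rcases Finset.mem_union.1 hv with hv | hv
    · rw [Finset.mem_erase] at hv
      obtain ⟨e, he, hve⟩ := hcover v hv.2
      refine ⟨expRen w f e, expRen_mem_expE he, ?_⟩
      rw [expRen_def]
      by_cases hwe : w ∈ e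
      · rw [if_pos hwe]
        exact Finset.mem_union_left _ (Finset.mem_erase.2 ⟨hv.1, hve⟩)
      · rw [if_neg hwe]; exact hve
    · exact ⟨f, mem_expE.2 (Or.inl rfl), hv⟩
  show MP _ _ = _
  apply Set.Subset.antisymm
  · exact convexHull_min (mlSet_sub_res _ _ hV'sub hcover') (convex_res_CER _ _ _)
  · rintro y' ⟨z', hz', rfl⟩
    show res _ _ z' ∈ MP (V.erase w ∪ f) (expE E w f)
    -- the collapsed point
    set x : Pt V (clE E) := fun p => ev z' (expRen w f p.1) with hxdef
    have hx : x ∈ CER V E := claimA hcard hVsub hf hdisj z' hz'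
    have hresx : res V E x ∈ MP V E := by
      rw [show MP V E = _ from hext]
      exact ⟨x, hx, rfl⟩
    rw [MP, _root_.convexHull_eq] at hresx
    obtain ⟨ι, t, lam, y, hlam0, hlam1, hymem, hcm⟩ := hresx
    -- evaluation of the center of mass
    have hsum_rho : ∀ p : Finset N, p ∈ coords V E →
        ∑ i ∈ t, lam i * ev (y i) p = ev z' (expRen w f p) := by
      intro p hp
      have hpc : p ∈ coords V (clE E) := by
        rcases Finset.mem_union.1 hp with h | h
        · exact mem_coords_edge (mem_clE.2 ⟨hcard p h, p, h, Finset.Subset.refl p⟩)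
        · exact Finset.mem_union_right _ h
      have h1 := congrFun hcm ⟨p, hp⟩
      rw [Finset.centerMass_eq_of_sum_1 _ _ hlam1, Finset.sum_apply] at h1
      have h2 : ∀ i ∈ t, (lam i • y i) ⟨p, hp⟩ = lam i * ev (y i) p := by
        intro i _
        rw [Pi.smul_apply, smul_eq_mul, ev_coord _ hp]
      rw [Finset.sum_congr rfl h2] at h1
      rw [h1]
      show ev x p = _
      rw [ev_coord x hpc]
    have hbin : ∀ i ∈ t, ∀ v ∈ V, ev (y i) {v} = 0 ∨ ev (y i) {v} = 1 := by
      intro i hi v hv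
      rw [ev_coord _ (mem_coords_singleton hv)]
      exact (hymem i hi).1 _
    have hyprod : ∀ i ∈ t, ∀ e ∈ E, ev (y i) e = ∏ v ∈ e, ev (y i) {v} :=
      fun i hi => (hymem i hi).2
    -- the special maximal edge containing f
    obtain ⟨e0, he0, hwe0⟩ := hcover w hw
    obtain ⟨eM, heM, he0M⟩ := exists_maxEdge he0
    have hweM : w ∈ eM := he0M hwe0
    have heME : eM ∈ E := (mem_maxEdges.1 heM).1
    set eS := expRen w f eM with heSdef
    have heSmax : eS ∈ maxEdges (expE E w f) := expRen_maxEdge hcard hVsub hf hdisj heM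
    have heSeq : eS = eM.erase w ∪ f := by rw [heSdef, expRen_def, if_pos hweM]
    have hfS : f ⊆ eS := heSeq ▸ Finset.subset_union_right
    set μS : Finset N → ℝ := fun S => psi z' (eS \ S) eS with hμSdef
    have hμS0 : ∀ S ∈ eS.powerset, 0 ≤ μS S := fun S _ => hz' eS heSmax _ Finset.sdiff_subset
    have hdecS : ∀ A : Finset N, A ⊆ eS →
        ∑ S ∈ eS.powerset, (if A ⊆ S then μS S else 0) = ev z' A :=
      fun A hA => decomp_eq z' hA
    have hone : ev z' ∅ = 1 := ev_empty z' (fun g hg => clE_nonempty g hg)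
    set zf := ev z' f with hzfdef
    have hmono : ∀ A B : Finset N, A ⊆ B → B ⊆ eS → ev z' B ≤ ev z' A := by
      intro A B hAB hB
      rw [← hdecS A (hAB.trans hB), ← hdecS B hB]
      apply Finset.sum_le_sum
      intro S hS
      by_cases h1 : B ⊆ S
      · rw [if_pos h1, if_pos (hAB.trans h1)]
      · rw [if_neg h1]
        split_ifs with h2
        · exact hμS0 S hS
        · exact le_refl 0
    have hzf1 : zf ≤ 1 := by
      have := hmono ∅ f (Finset.empty_subset f) hfS
      rwa [hone] at this
    have hu_ge : ∀ u ∈ f, zf ≤ ev z' {u} :=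
      fun u hu => hmono {u} f (Finset.singleton_subset_iff.2 hu) hfS
    have hu_le1 : ∀ u ∈ f, ev z' {u} ≤ 1 := by
      intro u hu
      have := hmono ∅ {u} (Finset.empty_subset _)
        ((Finset.singleton_subset_iff.2 hu).trans hfS)
      rwa [hone] at this
    set D : Finset N → ℝ := fun F => ∑ S ∈ eS.powerset, (if S ∩ f = F then μS S else 0)
      with hDdef
    have hD0 : ∀ F, 0 ≤ D F := by
      intro F
      apply Finset.sum_nonneg
      intro S hS
      split_ifs
      · exact hμS0 S hS
      · exact le_refl 0
    have hDkey : ∀ A : Finset N, A ⊆ f → ∑ F ∈ f.powerset,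
        ((if F = f then (0:ℝ) else D F) * (if A ⊆ F then (1:ℝ) else 0)) = ev z' A - zf := by
      intro A hA
      set cF : Finset N → ℝ :=
        fun F => (if F = f then (0:ℝ) else 1) * (if A ⊆ F then (1:ℝ) else 0) with hcFdef
      have step1 : ∀ F ∈ f.powerset,
          (if F = f then (0:ℝ) else D F) * (if A ⊆ F then (1:ℝ) else 0)
            = ∑ S ∈ eS.powerset, (if S ∩ f = F then cF F * μS S else 0) := by
        intro F _
        have hlhs : (if F = f then (0:ℝ) else D F) * (if A ⊆ F then (1:ℝ) else 0)
            = cF F * D F := by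
          simp only [hcFdef]
          split_ifs <;> ring
        rw [hlhs, hDdef, Finset.mul_sum]
        refine Finset.sum_congr rfl fun S _ => ?_
        rw [mul_ite, mul_zero]
      rw [Finset.sum_congr rfl step1, Finset.sum_comm]
      have step2 : ∀ S ∈ eS.powerset,
          ∑ F ∈ f.powerset, (if S ∩ f = F then cF F * μS S else 0) = cF (S ∩ f) * μS S := by
        intro S _
        rw [Finset.sum_ite_eq f.powerset (S ∩ f) (fun F => cF F * μS S),
          if_pos (Finset.mem_powerset.2 Finset.inter_subset_right)]
      rw [Finset.sum_congr rfl step2]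
      have step3 : ∀ S ∈ eS.powerset, cF (S ∩ f) * μS S
          = (if A ⊆ S then μS S else 0) - (if f ⊆ S then μS S else 0) := by
        intro S _
        have h1 : S ∩ f = f ↔ f ⊆ S := Finset.inter_eq_right
        have h2 : A ⊆ S ∩ f ↔ A ⊆ S :=
          ⟨fun h => h.trans Finset.inter_subset_left,
           fun h => Finset.subset_inter h hA⟩
        simp only [hcFdef]
        by_cases hfs : f ⊆ S
        · rw [if_pos (h1.2 hfs), if_pos hfs, if_pos (hA.trans hfs)]; ring
        · rw [if_neg (fun hh => hfs (h1.1 hh)), if_neg hfs, sub_zero]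
          by_cases hAS : A ⊆ S
          · rw [if_pos (h2.2 hAS), if_pos hAS]; ring
          · rw [if_neg (fun hh => hAS (h2.1 hh)), if_neg hAS]; ring
      rw [Finset.sum_congr rfl step3, Finset.sum_sub_distrib,
        hdecS A (hA.trans hfS), hdecS f hfS]
    -- the lifted points and weights
    set sval : ι → Finset N → N → ℝ :=
      fun i F v => if v ∈ f then (if v ∈ F then 1 else 0) else ev (y i) {v} with hsvaldef
    set P : ι × Finset N → Pt (V.erase w ∪ f) (expE E w f) :=
      fun q => fun p => ∏ v ∈ p.1, sval q.1 q.2 v with hPdef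
    set wt : ι × Finset N → ℝ := fun q => lam q.1 *
      (if ev (y q.1) {w} = 1 then (if q.2 = f then 1 else 0)
       else (if q.2 = f then 0 else D q.2 / (1 - zf))) with hwtdef
    set T := t ×ˢ f.powerset with hTdef
    have hwt0 : ∀ q ∈ T, 0 ≤ wt q := by
      rintro ⟨i, F⟩ hq
      rw [hTdef, Finset.mem_product] at hq
      simp only [hwtdef]
      apply mul_nonneg (hlam0 _ hq.1)
      split_ifs
      · norm_num
      · norm_num
      · norm_num
      · exact div_nonneg (hD0 _) (by linarith)
    have hwV : ({w} : Finset N) ∈ coords V E := mem_coords_singleton hw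
    have hρw : expRen w f {w} = f := by rw [expRen_singleton, if_pos rfl]
    have hwzf : ∑ i ∈ t, lam i * ev (y i) {w} = zf := by
      have := hsum_rho {w} hwV
      rwa [hρw] at this
    have h1mw : ∑ i ∈ t, lam i * (1 - ev (y i) {w}) = 1 - zf := by
      have : ∀ i ∈ t, lam i * (1 - ev (y i) {w}) = lam i - lam i * ev (y i) {w} :=
        fun i _ => by ring
      rw [Finset.sum_congr rfl this, Finset.sum_sub_distrib, hlam1, hwzf]
    have hzero : zf = 1 → ∀ i ∈ t, lam i * (1 - ev (y i) {w}) = 0 := by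
      intro h1 i hi
      have hnn : ∀ j ∈ t, 0 ≤ lam j * (1 - ev (y j) {w}) := by
        intro j hj
        apply mul_nonneg (hlam0 j hj)
        rcases hbin j hj w hw with h | h <;> rw [h] <;> norm_num
      have hsumz : ∑ j ∈ t, lam j * (1 - ev (y j) {w}) = 0 := by rw [h1mw, h1]; ring
      exact (Finset.sum_eq_zero_iff_of_nonneg hnn).1 hsumz i hi
    -- the key summation identity
    have hkey : ∀ A : Finset N, A ⊆ f → ∀ a : ι → ℝ,
        ∑ q ∈ T, wt q * (a q.1 * (if A ⊆ q.2 then (1:ℝ) else 0))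
          = (∑ i ∈ t, lam i * (ev (y i) {w} * a i))
            + (∑ i ∈ t, lam i * ((1 - ev (y i) {w}) * a i)) * ((ev z' A - zf) / (1 - zf)) := by
      intro A hA a
      rw [hTdef, Finset.sum_product, Finset.sum_mul, ← Finset.sum_add_distrib]
      refine Finset.sum_congr rfl fun i hi => ?_
      simp only [hwtdef]
      rcases hbin i hi w hw with h0 | h1
      · rw [h0]
        have hne : (0:ℝ) ≠ 1 := by norm_num
        simp only [if_neg hne]
        have hterm : ∀ F ∈ f.powerset,
            lam i * (if F = f then (0:ℝ) else D F / (1 - zf)) * (a i * (if A ⊆ F then (1:ℝ) else 0))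
              = (lam i * a i / (1 - zf)) * ((if F = f then (0:ℝ) else D F) * (if A ⊆ F then (1:ℝ) else 0)) := by
          intro F _
          split_ifs <;> ring
        rw [Finset.sum_congr rfl hterm, ← Finset.mul_sum, hDkey A hA]
        ring
      · rw [h1]
        simp only [eq_self_iff_true, if_true]
        have hterm : ∀ F ∈ f.powerset,
            lam i * (if F = f then (1:ℝ) else 0) * (a i * (if A ⊆ F then (1:ℝ) else 0))
              = (if F = f then lam i * (a i * (if A ⊆ F then (1:ℝ) else 0)) else 0) := by
          intro F _
          split_ifs <;> ring
        rw [Finset.sum_congr rfl hterm,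
          Finset.sum_ite_eq' f.powerset f
            (fun F => lam i * (a i * (if A ⊆ F then (1:ℝ) else 0))),
          if_pos (Finset.mem_powerset.2 (Finset.Subset.refl f)), if_pos hA]
        ring
    -- membership of the lifted points in the multilinear set
    have hcoordsub : ∀ p ∈ coords (V.erase w ∪ f) (expE E w f), p ⊆ V.erase w ∪ f := by
      intro p hp
      rcases Finset.mem_union.1 hp with h | h
      · exact hV'sub p h
      · obtain ⟨v, hv, rfl⟩ := Finset.mem_image.1 h
        exact Finset.singleton_subset_iff.2 hv
    have hPmem : ∀ q ∈ T, P q ∈ mlSet (V.erase w ∪ f) (expE E w f) := by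
      rintro ⟨i, F⟩ hq
      rw [hTdef, Finset.mem_product] at hq
      constructor
      · rintro ⟨p, hp⟩
        show (∏ v ∈ p, sval i F v) = 0 ∨ (∏ v ∈ p, sval i F v) = 1
        apply prod_binary
        intro v hv
        have hvV' := hcoordsub p hp hv
        simp only [hsvaldef]
        by_cases hvf : v ∈ f
        · rw [if_pos hvf]
          split_ifs
          · right; rfl
          · left; rfl
        · rw [if_neg hvf]
          have hvV : v ∈ V :=
            Finset.mem_of_mem_erase ((Finset.mem_union.1 hvV').resolve_right hvf)
          exact hbin i hq.1 v hvV
      · intro e he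
        have heV' : e ⊆ V.erase w ∪ f := hV'sub e he
        rw [ev_coord _ (mem_coords_edge he)]
        show (∏ v ∈ e, sval i F v) = _
        refine Finset.prod_congr rfl fun v hv => ?_
        rw [ev_coord _ (mem_coords_singleton (heV' hv))]
        show sval i F v = ∏ u ∈ ({v} : Finset N), sval i F u
        rw [Finset.prod_singleton]
    -- total weight is 1
    have hwtsum : ∑ q ∈ T, wt q = 1 := by
      have h := hkey ∅ (Finset.empty_subset f) (fun _ => 1)
      simp only [Finset.empty_subset, if_true, mul_one, one_mul] at h
      rw [hone, hwzf, h1mw] at h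
      rw [h]
      by_cases hzf : zf = 1
      · rw [hzf]; ring
      · rw [div_self (sub_ne_zero.2 (fun hh => hzf hh.symm))]; ring
    -- the center of mass equals the projection of z'
    have hfinal : T.centerMass wt P = res (V.erase w ∪ f) (expE E w f) z' := by
      rw [Finset.centerMass_eq_of_sum_1 _ _ hwtsum]
      funext pp
      obtain ⟨p, hp⟩ := pp
      rw [Finset.sum_apply]
      show ∑ q ∈ T, (wt q • P q) ⟨p, hp⟩ = ev z' p
      have hterm : ∀ q ∈ T, (wt q • P q) ⟨p, hp⟩
          = wt q * ((∏ v ∈ p \ f, ev (y q.1) {v}) * (if p ∩ f ⊆ q.2 then (1:ℝ) else 0)) := by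
        rintro ⟨i, F⟩ hq
        rw [hTdef, Finset.mem_product] at hq
        rw [Pi.smul_apply, smul_eq_mul]
        congr 1
        show (∏ v ∈ p, sval i F v) = _
        rw [← Finset.prod_inter_mul_prod_diff p f (sval i F)]
        have hinter : ∏ v ∈ p ∩ f, sval i F v = (if p ∩ f ⊆ F then (1:ℝ) else 0) := by
          have hc : ∀ v ∈ p ∩ f, sval i F v = (if v ∈ F then (1:ℝ) else 0) := by
            intro v hv
            simp only [hsvaldef]
            rw [if_pos (Finset.mem_inter.1 hv).2]
          rw [Finset.prod_congr rfl hc, Finset.prod_boole]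
          by_cases hsub : p ∩ f ⊆ F
          · rw [if_pos (fun v hv => hsub hv), if_pos hsub]
          · rw [if_neg, if_neg hsub]
            intro hall
            exact hsub (fun v hv => hall v hv)
        have hdiffp : ∏ v ∈ p \ f, sval i F v = ∏ v ∈ p \ f, ev (y i) {v} := by
          refine Finset.prod_congr rfl fun v hv => ?_
          simp only [hsvaldef]
          rw [if_neg (Finset.mem_sdiff.1 hv).2]
        rw [hinter, hdiffp]
        ring
      rw [Finset.sum_congr rfl hterm,
        hkey (p ∩ f) Finset.inter_subset_right (fun i => ∏ v ∈ p \ f, ev (y i) {v})]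
      rcases Finset.mem_union.1 hp with hpE | hpsing
      · rcases mem_expE.1 hpE with hpf | ⟨hpE2, hwp⟩ | ⟨e, heE2, hwe2, rfl⟩
        · -- p = f
          subst hpf
          rw [Finset.inter_self, Finset.sdiff_self]
          simp only [Finset.prod_empty, mul_one]
          rw [hwzf, h1mw, ← hzfdef, sub_self, zero_div, mul_zero, add_zero, hzfdef]
        · -- p ∈ E with w ∉ p
          have hpV : p ⊆ V := hVsub p hpE2
          have hdisjp : Disjoint p f := (hdisj.mono_right hpV).symm
          have hpf0 : p ∩ f = ∅ := Finset.disjoint_iff_inter_eq_empty.1 hdisjp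
          have hpdf : p \ f = p := Finset.sdiff_eq_self_iff_disjoint.2 hdisjp
          rw [hpf0, hpdf, hone]
          have hSt : ∑ i ∈ t, lam i * ev (y i) p = ev z' p := by
            have := hsum_rho p (mem_coords_edge hpE2)
            rwa [expRen_def, if_neg hwp] at this
          have hsum2 : (∑ i ∈ t, lam i * (ev (y i) {w} * ∏ v ∈ p, ev (y i) {v}))
              + ∑ i ∈ t, lam i * ((1 - ev (y i) {w}) * ∏ v ∈ p, ev (y i) {v})
                = ev z' p := by
            rw [← Finset.sum_add_distrib, ← hSt]
            refine Finset.sum_congr rfl fun i hi => ?_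
            rw [← hyprod i hi p hpE2]
            ring
          by_cases hzf : zf = 1
          · have hSb0 : ∑ i ∈ t, lam i * ((1 - ev (y i) {w}) * ∏ v ∈ p, ev (y i) {v})
                = 0 := by
              apply Finset.sum_eq_zero
              intro i hi
              have h0 := hzero hzf i hi
              calc lam i * ((1 - ev (y i) {w}) * ∏ v ∈ p, ev (y i) {v})
                  = (lam i * (1 - ev (y i) {w})) * ∏ v ∈ p, ev (y i) {v} := by ring
                _ = 0 := by rw [h0, zero_mul]
            rw [hSb0, zero_mul, add_zero]
            rw [hSb0, add_zero] at hsum2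
            exact hsum2
          · rw [div_self (sub_ne_zero.2 (fun hh => hzf hh.symm)), mul_one]
            exact hsum2
        · -- p = e.erase w ∪ f
          have hef : Disjoint (e.erase w) f :=
            (hdisj.mono_right ((Finset.erase_subset w e).trans (hVsub e heE2))).symm
          have hinter : (e.erase w ∪ f) ∩ f = f :=
            Finset.inter_eq_right.2 Finset.subset_union_right
          have hdiffe : (e.erase w ∪ f) \ f = e.erase w := Finset.union_sdiff_cancel_right hef
          rw [hinter, hdiffe, ← hzfdef, sub_self, zero_div, mul_zero, add_zero]
          have hSt : ∑ i ∈ t, lam i * ev (y i) e = ev z' (e.erase w ∪ f) := by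
            have := hsum_rho e (mem_coords_edge heE2)
            rwa [expRen_def, if_pos hwe2] at this
          rw [← hSt]
          refine Finset.sum_congr rfl fun i hi => ?_
          rw [hyprod i hi e heE2, ← Finset.mul_prod_erase e (fun v => ev (y i) {v}) hwe2]
      · -- p is a singleton
        obtain ⟨v, hvV', rfl⟩ := Finset.mem_image.1 hpsing
        rcases Finset.mem_union.1 hvV' with hvVe | hvf
        · -- v ∈ V.erase w
          have hvw : v ≠ w := (Finset.mem_erase.1 hvVe).1
          have hvV : v ∈ V := (Finset.mem_erase.1 hvVe).2
          have hvnf : v ∉ f := fun h => Finset.disjoint_left.1 hdisj h hvV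
          have hpf0 : {v} ∩ f = ∅ := Finset.singleton_inter_of_notMem hvnf
          have hpdf : ({v} : Finset N) \ f = {v} :=
            Finset.sdiff_eq_self_iff_disjoint.2 (Finset.disjoint_singleton_left.2 hvnf)
          rw [hpf0, hpdf, hone]
          simp only [Finset.prod_singleton]
          have hSt : ∑ i ∈ t, lam i * ev (y i) {v} = ev z' {v} := by
            have := hsum_rho {v} (mem_coords_singleton hvV)
            rwa [expRen_singleton, if_neg hvw] at this
          have hsum2 : (∑ i ∈ t, lam i * (ev (y i) {w} * ev (y i) {v}))
              + ∑ i ∈ t, lam i * ((1 - ev (y i) {w}) * ev (y i) {v}) = ev z' {v} := by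
            rw [← Finset.sum_add_distrib, ← hSt]
            refine Finset.sum_congr rfl fun i hi => by ring
          by_cases hzf : zf = 1
          · have hSb0 : ∑ i ∈ t, lam i * ((1 - ev (y i) {w}) * ev (y i) {v}) = 0 := by
              apply Finset.sum_eq_zero
              intro i hi
              have h0 := hzero hzf i hi
              calc lam i * ((1 - ev (y i) {w}) * ev (y i) {v})
                  = (lam i * (1 - ev (y i) {w})) * ev (y i) {v} := by ring
                _ = 0 := by rw [h0, zero_mul]
            rw [hSb0, zero_mul, add_zero]
            rw [hSb0, add_zero] at hsum2
            exact hsum2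
          · rw [div_self (sub_ne_zero.2 (fun hh => hzf hh.symm)), mul_one]
            exact hsum2
        · -- v ∈ f
          have hvin : {v} ∩ f = {v} :=
            Finset.inter_eq_left.2 (Finset.singleton_subset_iff.2 hvf)
          have hvd : ({v} : Finset N) \ f = ∅ :=
            Finset.sdiff_eq_empty_iff_subset.2 (Finset.singleton_subset_iff.2 hvf)
          rw [hvin, hvd]
          simp only [Finset.prod_empty, mul_one]
          rw [hwzf, h1mw]
          by_cases hzf : zf = 1
          · have hv1 : ev z' {v} = 1 := by
              have h1 := hu_le1 v hvf
              have h2 := hu_ge v hvf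
              rw [hzf] at h2
              linarith
            rw [hv1, hzf]
            ring
          · have h0 : (1:ℝ) - zf ≠ 0 := sub_ne_zero.2 (fun hh => hzf hh.symm)
            field_simp
            ring
    have hmem := Finset.centerMass_mem_convexHull T hwt0 (by rw [hwtsum]; norm_num) hPmem
    rw [hfinal] at hmem
    exact hmem

end BPO
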